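/- (Correctness of Algorithm 2.) Let Y be a discrete random variable and S a finite set of discrete random variables with Y ∉ S, let M₀ be a Markov boundary of Y within S, and for X_i ∈ M₀ let M_i be a Markov boundary of Y within S \ {X_i}. Then the following are equivalent: (a) MI(Y, S \ {X_i}) = MI(Y, S); (b) CMI(Y, M₀ | M_i) = 0, i.e., Y ⊥ M₀ | M_i. Consequently, Y has multiple Markov boundaries within S if and only if there exists X_i ∈ M₀ for which (b) holds. -/

import Mathlib

open scoped BigOperators

noncomputable section

/-- `p` is a probability mass function on the finite type `Ω`. -/
def IsDist {Ω : Type*} [Fintype Ω] (p : Ω → ℝ) : Prop :=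
  (∀ w, 0 ≤ p w) ∧ ∑ w, p w = 1

/-- Total variation distance between two distributions on the same finite type. -/
def tvDist {Ω : Type*} [Fintype Ω] (p q : Ω → ℝ) : ℝ :=
  (∑ w, |p w - q w|) / 2

variable {ι : Type*} [Fintype ι] [DecidableEq ι]
variable {α : ι → Type*} [∀ i, Fintype (α i)] [∀ i, DecidableEq (α i)]

/-- Marginal probability, under joint pmf `p`, of the event that the variables in the
collection `A` take the values prescribed by the configuration `x`. -/
def margProb (p : (∀ i, α i) → ℝ) (A : Finset ι) (x : ∀ i, α i) : ℝ :=
  ∑ w : ∀ i, α i, if ∀ i ∈ A, w i = x i then p w else 0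

/-- Conditional independence of the collections `A` and `B` given the collection `C`:
`f(a, b | c) = f(a | c) f(b | c)` whenever `f(c) > 0` (stated in multiplied-out form). -/
def CondIndep (p : (∀ i, α i) → ℝ) (A B C : Finset ι) : Prop :=
  ∀ x : ∀ i, α i, 0 < margProb p C x →
    margProb p (A ∪ B ∪ C) x * margProb p C x =
      margProb p (A ∪ C) x * margProb p (B ∪ C) x

/-- `M` is a Markov blanket of the variable `y` within the collection `T`. -/
def MarkovBlanket (p : (∀ i, α i) → ℝ) (y : ι) (T M : Finset ι) : Prop :=
  M ⊆ T ∧ CondIndep p {y} (T \ M) M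

/-- `M` is a Markov boundary of `y` within `T`: a Markov blanket no proper subset of
which is a Markov blanket. -/
def MarkovBoundary (p : (∀ i, α i) → ℝ) (y : ι) (T M : Finset ι) : Prop :=
  MarkovBlanket p y T M ∧ ∀ M' ⊂ M, ¬ MarkovBlanket p y T M'

/-- Mutual information between the collections `A` and `B`
(with the convention `0 · log(junk) = 0` on zero-probability terms). -/
def MI (p : (∀ i, α i) → ℝ) (A B : Finset ι) : ℝ :=
  ∑ w : ∀ i, α i, p w *
    Real.log (margProb p (A ∪ B) w / (margProb p A w * margProb p B w))

/-- Conditional mutual information between collections `A` and `B` given `C`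
(with the convention `0 · log(junk) = 0` on zero-probability terms). -/
def CMI (p : (∀ i, α i) → ℝ) (A B C : Finset ι) : ℝ :=
  ∑ w : (∀ i, α i), p w *
    Real.log ((margProb p (A ∪ B ∪ C) w * margProb p C w) /
      (margProb p (A ∪ C) w * margProb p (B ∪ C) w))


variable [∀ i, Nonempty (α i)]

set_option linter.unusedSectionVars false
set_option linter.unusedVariables false

section AuxA
variable {p : (∀ i, α i) → ℝ}

lemma margProb_nonneg (hp : ∀ w, 0 ≤ p w) (A : Finset ι) (x : ∀ i, α i) :
    0 ≤ margProb p A x := by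
  refine Finset.sum_nonneg fun w _ => ?_
  split <;> [exact hp w; exact le_rfl]

lemma le_margProb (hp : ∀ w, 0 ≤ p w) (A : Finset ι) (w : ∀ i, α i) :
    p w ≤ margProb p A w := by
  classical
  have := Finset.single_le_sum (f := fun w' => if ∀ i ∈ A, w' i = w i then p w' else 0)
    (fun w' _ => by split <;> [exact hp w'; exact le_rfl]) (Finset.mem_univ w)
  simp at this; exact this

lemma margProb_mono (hp : ∀ w, 0 ≤ p w) {A B : Finset ι} (h : A ⊆ B) (x : ∀ i, α i) :
    margProb p B x ≤ margProb p A x := by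
  refine Finset.sum_le_sum fun w _ => ?_
  by_cases hw : ∀ i ∈ B, w i = x i
  · rw [if_pos hw, if_pos fun i hi => hw i (h hi)]
  · rw [if_neg hw]
    split <;> [exact hp w; exact le_rfl]

lemma margProb_congr {A : Finset ι} {x x' : ∀ i, α i} (h : ∀ i ∈ A, x i = x' i) :
    margProb p A x = margProb p A x' := by
  refine Finset.sum_congr rfl fun w _ => ?_
  refine if_congr ?_ rfl rfl
  constructor <;> intro hw i hi
  · rw [← h i hi]; exact hw i hi
  · rw [h i hi]; exact hw i hi

lemma margProb_empty (hp : IsDist p) (x : ∀ i, α i) : margProb p ∅ x = 1 := by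
  simp [margProb, hp.2]

end AuxA
section Proj

def proj (E : Finset ι) (x : ∀ i, α i) : ∀ i, α i :=
  fun i => if i ∈ E then x i else Classical.arbitrary (α i)

lemma proj_mem {E : Finset ι} {x : ∀ i, α i} {i : ι} (hi : i ∈ E) : proj E x i = x i :=
  if_pos hi

lemma proj_proj (E : Finset ι) (x : ∀ i, α i) : proj E (proj E x) = proj E x := by
  funext i; unfold proj; split <;> rfl

lemma proj_eq_iff {E : Finset ι} {x v : ∀ i, α i} :
    (proj E v = v ∧ ∀ i ∈ E, x i = v i) ↔ v = proj E x := by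
  constructor
  · rintro ⟨h1, h2⟩
    funext i
    by_cases hi : i ∈ E
    · rw [proj_mem hi, h2 i hi]
    · rw [← congrFun h1 i]; unfold proj; simp [hi]
  · rintro rfl
    refine ⟨proj_proj E x, fun i hi => (proj_mem hi).symm⟩

lemma margProb_proj {p : (∀ i, α i) → ℝ} {D E : Finset ι} (h : D ⊆ E) (x : ∀ i, α i) :
    margProb p D (proj E x) = margProb p D x :=
  margProb_congr fun i hi => proj_mem (h hi)

end Proj

section Proj2
variable {p : (∀ i, α i) → ℝ}

lemma proj_fixed_iff {E : Finset ι} {v : ∀ i, α i} :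
    proj E v = v ↔ ∀ i ∉ E, v i = Classical.arbitrary (α i) := by
  constructor
  · intro h i hi
    rw [← congrFun h i]; unfold proj; simp [hi]
  · intro h
    funext i
    by_cases hi : i ∈ E
    · exact proj_mem hi
    · unfold proj
      rw [if_neg hi, h i hi]

/-- Grouping lemma: a sum of `p w * g w` with `g` depending only on coordinates in `E`
can be written as a sum over configurations fixed by `proj E`, weighted by marginals. -/
lemma sum_mul_local (p : (∀ i, α i) → ℝ) (E : Finset ι) (g : (∀ i, α i) → ℝ)
    (hg : ∀ w, g (proj E w) = g w) :
    ∑ w, p w * g w = ∑ v, if proj E v = v then margProb p E v * g v else 0 := by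
  have key : ∀ v, (if proj E v = v then margProb p E v * g v else 0)
      = ∑ w, if proj E v = v ∧ ∀ i ∈ E, w i = v i then p w * g v else 0 := by
    intro v
    split_ifs with h
    · rw [margProb, Finset.sum_mul]
      refine Finset.sum_congr rfl fun w _ => ?_
      by_cases hw : ∀ i ∈ E, w i = v i <;> simp [hw, h]
    · refine (Finset.sum_eq_zero fun w _ => ?_).symm
      rw [if_neg]; rintro ⟨h1, -⟩; exact h h1
  rw [Finset.sum_congr rfl fun v _ => key v, Finset.sum_comm]
  refine Finset.sum_congr rfl fun w _ => Eq.symm ?_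
  have cond : ∀ v : ∀ i, α i, (proj E v = v ∧ ∀ i ∈ E, w i = v i) ↔ v = proj E w :=
    fun v => proj_eq_iff
  calc ∑ v, (if proj E v = v ∧ ∀ i ∈ E, w i = v i then p w * g v else 0)
      = ∑ v, if v = proj E w then p w * g v else 0 :=
        Finset.sum_congr rfl fun v _ => if_congr (cond v) rfl rfl
    _ = p w * g (proj E w) := Finset.sum_ite_eq' _ _ _ |>.trans (by simp)
    _ = p w * g w := by rw [hg]

/-- Expanding a sum over configurations fixed by `proj (insert j F)` as a double sum. -/
lemma sum_fixed_insert {j : ι} {F : Finset ι} (hj : j ∉ F) (h : (∀ i, α i) → ℝ) :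
    ∑ v, (if proj (insert j F) v = v then h v else 0)
      = ∑ v, (if proj F v = v then ∑ a : α j, h (Function.update v j a) else 0) := by
  have rhs : ∑ v, (if proj F v = v then ∑ a : α j, h (Function.update v j a) else 0)
      = ∑ x ∈ (Finset.univ.filter fun v => proj F v = v) ×ˢ Finset.univ,
          h (Function.update x.1 j x.2) := by
    rw [Finset.sum_product, ← Finset.sum_filter]
  have lhs : ∑ v, (if proj (insert j F) v = v then h v else 0)
      = ∑ v ∈ Finset.univ.filter fun v => proj (insert j F) v = v, h v := by
    rw [Finset.sum_filter]
  rw [lhs, rhs]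
  refine (Finset.sum_nbij' (fun x => Function.update x.1 j x.2)
    (fun v => (Function.update v j (Classical.arbitrary (α j)), v j)) ?_ ?_ ?_ ?_ ?_).symm
  · rintro ⟨v, a⟩ hv
    simp only [Finset.mem_product, Finset.mem_filter, Finset.mem_univ, true_and] at hv ⊢
    rw [proj_fixed_iff] at hv ⊢
    intro i hi
    have hij : i ≠ j := fun e => hi (e ▸ Finset.mem_insert_self j F)
    rw [Function.update_of_ne hij]
    exact hv.1 i fun hiF => hi (Finset.mem_insert_of_mem hiF)
  · intro v hv
    simp only [Finset.mem_product, Finset.mem_filter, Finset.mem_univ, true_and, and_true] at hv ⊢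
    rw [proj_fixed_iff] at hv ⊢
    intro i hi
    by_cases hij : i = j
    · subst hij; rw [Function.update_self]
    · rw [Function.update_of_ne hij]
      exact hv i (by simp [hi, hij])
  · rintro ⟨v, a⟩ hv
    simp only [Finset.mem_product, Finset.mem_filter, Finset.mem_univ, true_and] at hv
    have hvj : v j = Classical.arbitrary (α j) := (proj_fixed_iff.mp hv.1) j hj
    ext i
    · by_cases hij : i = j
      · subst hij; simp [hvj]
      · simp [Function.update_of_ne hij]
    · simp
  · intro v hv
    funext i
    by_cases hij : i = j
    · subst hij; simp
    · simp [Function.update_of_ne hij]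
  · rintro ⟨v, a⟩ _; rfl

/-- Marginalisation over one coordinate. -/
lemma sum_margProb_update {j : ι} {D : Finset ι} (hj : j ∉ D) (x : ∀ i, α i) :
    ∑ a : α j, margProb p (insert j D) (Function.update x j a) = margProb p D x := by
  unfold margProb
  rw [Finset.sum_comm]
  refine Finset.sum_congr rfl fun w _ => ?_
  have cond : ∀ a : α j, (∀ i ∈ insert j D, w i = Function.update x j a i)
      ↔ (a = w j ∧ ∀ i ∈ D, w i = x i) := by
    intro a
    constructor
    · intro hc
      refine ⟨((hc j (Finset.mem_insert_self j D)).trans (Function.update_self j a x)).symm, ?_⟩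
      intro i hi
      have hij : i ≠ j := fun e => hj (by rwa [e] at hi)
      have := hc i (Finset.mem_insert_of_mem hi)
      rwa [Function.update_of_ne hij] at this
    · rintro ⟨rfl, hc⟩ i hi
      rcases Finset.mem_insert.mp hi with rfl | hi
      · rw [Function.update_self]
      · rw [Function.update_of_ne (fun e => hj (by rwa [e] at hi))]
        exact hc i hi
  calc ∑ a : α j, (if ∀ i ∈ insert j D, w i = Function.update x j a i then p w else 0)
      = ∑ a : α j, (if a = w j ∧ ∀ i ∈ D, w i = x i then p w else 0) :=
        Finset.sum_congr rfl fun a _ => if_congr (cond a) rfl rfl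
    _ = if ∀ i ∈ D, w i = x i then p w else 0 := by
        by_cases hQ : ∀ i ∈ D, w i = x i
        · rw [if_pos hQ,
            Finset.sum_congr rfl fun a _ => if_congr (and_iff_left hQ) rfl (rfl : (0:ℝ) = 0)]
          simp [Finset.sum_ite_eq']
        · rw [if_neg hQ]
          refine Finset.sum_eq_zero fun a _ => ?_
          rw [if_neg]
          rintro ⟨-, h2⟩; exact hQ h2

lemma margProb_update_irrel {j : ι} {D : Finset ι} (hj : j ∉ D) (x : ∀ i, α i) (a : α j) :
    margProb p D (Function.update x j a) = margProb p D x :=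
  margProb_congr fun i hi => Function.update_of_ne (fun e => hj (by rwa [e] at hi)) a x

end Proj2
section Core
variable {p : (∀ i, α i) → ℝ}

lemma step_induction (p : (∀ i, α i) → ℝ) (y : ι) (C : Finset ι) (D : Finset ι)
    (hD : Disjoint D (insert y C)) :
    ∑ v, (if proj (insert y C ∪ D) v = v then
        margProb p (insert y C) v * margProb p (C ∪ D) v / margProb p C v else 0)
      = ∑ v, (if proj (insert y C) v = v then
        margProb p (insert y C) v * margProb p C v / margProb p C v else 0) := by
  classical
  induction D using Finset.induction_on with
  | empty => simp
  | @insert j D hjD ih =>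
    have hdj : Disjoint D (insert y C) :=
      (Finset.disjoint_insert_left.mp hD).2
    have hjyC : j ∉ insert y C := (Finset.disjoint_insert_left.mp hD).1
    have hjC : j ∉ C := fun h => hjyC (Finset.mem_insert_of_mem h)
    have hjCD : j ∉ C ∪ D := by
      simp only [Finset.mem_union]; rintro (h | h); exacts [hjC h, hjD h]
    have hjF : j ∉ insert y C ∪ D := by
      simp only [Finset.mem_union]; rintro (h | h); exacts [hjyC h, hjD h]
    have hset1 : insert y C ∪ insert j D = insert j (insert y C ∪ D) := by
      ext i; simp [Finset.mem_insert, Finset.mem_union, or_assoc, or_left_comm]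
    have hset2 : C ∪ insert j D = insert j (C ∪ D) := by
      ext i; simp [Finset.mem_insert, Finset.mem_union, or_assoc, or_left_comm]
    rw [hset1, hset2, sum_fixed_insert hjF, ← ih hdj]
    refine Finset.sum_congr rfl fun v _ => ?_
    refine if_congr Iff.rfl ?_ rfl
    have inner : ∀ a : α j,
        margProb p (insert y C) (Function.update v j a) *
          margProb p (insert j (C ∪ D)) (Function.update v j a) /
          margProb p C (Function.update v j a)
        = margProb p (insert y C) v *
            margProb p (insert j (C ∪ D)) (Function.update v j a) / margProb p C v := by
      intro a
      rw [margProb_update_irrel hjyC, margProb_update_irrel hjC]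
    rw [Finset.sum_congr rfl fun a _ => inner a]
    rw [show (fun a : α j => margProb p (insert y C) v *
        margProb p (insert j (C ∪ D)) (Function.update v j a) / margProb p C v)
      = fun a : α j => margProb p (insert y C) v / margProb p C v *
        margProb p (insert j (C ∪ D)) (Function.update v j a) from funext fun a => by ring,
      ← Finset.mul_sum, sum_margProb_update hjCD]
    ring

lemma sum_fixed_margProb (hp : IsDist p) (C : Finset ι) :
    ∑ v, (if proj C v = v then margProb p C v else 0) = 1 := by
  have := sum_mul_local p C (fun _ => 1) (fun _ => rfl)
  simp only [mul_one] at this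
  rw [← this, hp.2]

lemma W_le_one (hp : IsDist p) (y : ι) (C : Finset ι) (hyC : y ∉ C) :
    ∑ v, (if proj (insert y C) v = v then
        margProb p (insert y C) v * margProb p C v / margProb p C v else 0) ≤ 1 := by
  have h1 : ∀ v : ∀ i, α i, (if proj (insert y C) v = v then
      margProb p (insert y C) v * margProb p C v / margProb p C v else 0)
      ≤ (if proj (insert y C) v = v then margProb p (insert y C) v else 0) := by
    intro v
    split_ifs with h
    · rcases eq_or_lt_of_le (margProb_nonneg hp.1 C v) with hC | hC
      · rw [← hC]; simp [margProb_nonneg hp.1]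
      · rw [mul_div_assoc, div_self hC.ne', mul_one]
    · exact le_rfl
  refine le_trans (Finset.sum_le_sum fun v _ => h1 v) ?_
  rw [sum_fixed_insert hyC]
  have h2 : ∀ v : ∀ i, α i, (if proj C v = v then
      ∑ a : α y, margProb p (insert y C) (Function.update v y a) else 0)
      = (if proj C v = v then margProb p C v else 0) := by
    intro v
    refine if_congr Iff.rfl ?_ rfl
    exact sum_margProb_update hyC v
  rw [Finset.sum_congr rfl fun v _ => h2 v]
  exact le_of_eq (sum_fixed_margProb hp C)

end Core
section CMIKey
set_option maxHeartbeats 1000000 in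
lemma cmi_key (p : (∀ i, α i) → ℝ) (hp : IsDist p) (y : ι) (B C : Finset ι)
    (hyB : y ∉ B) (hyC : y ∉ C) :
    0 ≤ CMI p {y} B C ∧ (CMI p {y} B C = 0 ↔ CondIndep p {y} B C) := by
  classical
  set E : Finset ι := insert y (B ∪ C) with hE
  have hEset : ({y} : Finset ι) ∪ B ∪ C = E := by
    ext i; simp [hE, Finset.mem_insert, Finset.mem_union, or_assoc]
  have hyCset : ({y} : Finset ι) ∪ C = insert y C := by
    ext i; simp [Finset.mem_insert]
  have hCE : C ⊆ E := fun i hi => by simp [hE, Finset.mem_insert, Finset.mem_union, hi]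
  have hyCE : insert y C ⊆ E := by
    intro i hi; rcases Finset.mem_insert.mp hi with rfl | hi
    · exact Finset.mem_insert_self _ _
    · exact hCE hi
  have hBCE : B ∪ C ⊆ E := fun i hi => Finset.mem_insert_of_mem hi
  set g : (∀ i, α i) → ℝ := fun w =>
    margProb p (insert y C) w * margProb p (B ∪ C) w /
      (margProb p E w * margProb p C w) with hgdef
  have hg : ∀ w, g (proj E w) = g w := by
    intro w
    simp only [hgdef]
    rw [margProb_proj hyCE, margProb_proj hBCE, margProb_proj (subset_rfl : E ⊆ E),
      margProb_proj hCE]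
  set aw : (∀ i, α i) → ℝ := fun w =>
    margProb p E w * margProb p C w /
      (margProb p (insert y C) w * margProb p (B ∪ C) w) with hawdef
  have posmarg : ∀ w, 0 < p w → ∀ D : Finset ι, 0 < margProb p D w :=
    fun w hw D => lt_of_lt_of_le hw (le_margProb hp.1 D w)
  have hCMI : CMI p {y} B C = ∑ w, p w * Real.log (aw w) := by
    unfold CMI
    simp only [hEset, hyCset, hawdef]
  -- T and its grouped form
  set T : ℝ := ∑ w, p w * g w with hTdef
  have hT : T = ∑ v, if proj E v = v then margProb p E v * g v else 0 :=
    sum_mul_local p E g hg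
  -- V
  set V : ℝ := ∑ v, if proj E v = v then
      margProb p (insert y C) v * margProb p (B ∪ C) v / margProb p C v else 0 with hVdef
  have hTleV : ∀ v : ∀ i, α i,
      (if proj E v = v then margProb p E v * g v else 0)
      ≤ (if proj E v = v then
          margProb p (insert y C) v * margProb p (B ∪ C) v / margProb p C v else 0) := by
    intro v
    split_ifs with h
    · rcases eq_or_lt_of_le (margProb_nonneg hp.1 E v) with hE0 | hE0
      · rw [← hE0, zero_mul]
        exact div_nonneg (mul_nonneg (margProb_nonneg hp.1 _ _) (margProb_nonneg hp.1 _ _))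
          (margProb_nonneg hp.1 _ _)
      · have hC0 : 0 < margProb p C v := lt_of_lt_of_le hE0 (margProb_mono hp.1 hCE v)
        simp only [hgdef]
        rw [mul_div_assoc']
        rw [div_le_div_iff₀ (by positivity) hC0]
        ring_nf
        exact le_of_eq (by ring)
    · exact le_rfl
  -- V = W ≤ 1
  have hsetE2 : insert y C ∪ (B \ C) = E := by
    ext i; simp [hE, Finset.mem_insert, Finset.mem_union, Finset.mem_sdiff]; tauto
  have hsetBC2 : C ∪ (B \ C) = B ∪ C := by
    ext i; simp [Finset.mem_union, Finset.mem_sdiff]; tauto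
  have hdisj : Disjoint (B \ C) (insert y C) := by
    rw [Finset.disjoint_left]
    intro i hi hi'
    rcases Finset.mem_insert.mp hi' with rfl | hi'
    · exact hyB (Finset.mem_sdiff.mp hi).1
    · exact (Finset.mem_sdiff.mp hi).2 hi'
  have hVW : V ≤ 1 := by
    have := step_induction p y C (B \ C) hdisj
    rw [hsetE2, hsetBC2] at this
    rw [hVdef, this]
    exact W_le_one hp y C hyC
  have hTleV' : T ≤ V := by
    rw [hT, hVdef]
    exact Finset.sum_le_sum fun v _ => hTleV v
  have hT1 : T ≤ 1 := le_trans hTleV' hVW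
  -- G
  set G : ℝ := ∑ w, p w * (Real.log (aw w) - 1 + g w) with hGdef
  have hterm : ∀ w : ∀ i, α i, 0 ≤ p w * (Real.log (aw w) - 1 + g w) := by
    intro w
    rcases eq_or_lt_of_le (hp.1 w) with hw | hw
    · rw [← hw, zero_mul]
    · have h1 := posmarg w hw E
      have h2 := posmarg w hw C
      have h3 := posmarg w hw (insert y C)
      have h4 := posmarg w hw (B ∪ C)
      have ha : 0 < aw w := by simp only [hawdef]; positivity
      have hga : g w = (aw w)⁻¹ := by
        simp only [hgdef, hawdef]
        rw [inv_div]
      have := Real.one_sub_inv_le_log_of_pos ha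
      rw [hga]
      nlinarith
  have hGnonneg : 0 ≤ G := Finset.sum_nonneg fun w _ => hterm w
  have hGeq : CMI p {y} B C = G + 1 - T := by
    rw [hCMI, hGdef, hTdef]
    rw [show (fun w => p w * (Real.log (aw w) - 1 + g w))
        = fun w => p w * Real.log (aw w) - p w + p w * g w from funext fun w => by ring]
    rw [Finset.sum_add_distrib, Finset.sum_sub_distrib, hp.2]
    ring
  have hnonneg : 0 ≤ CMI p {y} B C := by rw [hGeq]; linarith
  refine ⟨hnonneg, ?_, ?_⟩
  · -- CMI = 0 → CondIndep
    intro h0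
    have hG0 : G = 0 ∧ T = 1 := by constructor <;> linarith [hGeq ▸ h0]
    -- pointwise: p w > 0 → aw w = 1
    have haw1 : ∀ w, 0 < p w →
        margProb p E w * margProb p C w
          = margProb p (insert y C) w * margProb p (B ∪ C) w := by
      intro w hw
      have h1 := posmarg w hw E
      have h2 := posmarg w hw C
      have h3 := posmarg w hw (insert y C)
      have h4 := posmarg w hw (B ∪ C)
      have ha : 0 < aw w := by simp only [hawdef]; positivity
      have hga : g w = (aw w)⁻¹ := by simp only [hgdef, hawdef]; rw [inv_div]
      have hterm0 : p w * (Real.log (aw w) - 1 + g w) = 0 := by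
        have := (Finset.sum_eq_zero_iff_of_nonneg (fun w _ => hterm w)).mp hG0.1
        exact this w (Finset.mem_univ w)
      have hlog : Real.log (aw w) - 1 + (aw w)⁻¹ = 0 := by
        rw [hga] at hterm0
        rcases mul_eq_zero.mp hterm0 with h | h
        · exact absurd h hw.ne'
        · exact h
      have haw : aw w = 1 := by
        by_contra hne
        have hinv1 : (aw w)⁻¹ ≠ 1 := fun h => hne (by
          have := congrArg (·⁻¹) h; simpa using this)
        have := Real.log_lt_sub_one_of_pos (inv_pos.mpr ha) hinv1
        rw [Real.log_inv] at this
        linarith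
      have : margProb p E w * margProb p C w
          = margProb p (insert y C) w * margProb p (B ∪ C) w := by
        have hd : margProb p (insert y C) w * margProb p (B ∪ C) w ≠ 0 := by positivity
        simp only [hawdef] at haw
        rw [div_eq_one_iff_eq hd] at haw
        linarith [haw]
      exact this
    -- per-term equality T = V
    have hTV : ∀ v : ∀ i, α i, proj E v = v → margProb p E v = 0 →
        margProb p (insert y C) v * margProb p (B ∪ C) v / margProb p C v = 0 := by
      intro v hv hEv
      have hVT : V - T = 0 := by rw [hG0.2]; linarith
      have : ∑ v, ((if proj E v = v then
          margProb p (insert y C) v * margProb p (B ∪ C) v / margProb p C v else 0)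
          - (if proj E v = v then margProb p E v * g v else 0)) = 0 := by
        rw [Finset.sum_sub_distrib, ← hVdef, ← hT]
        exact hVT
      have hz := (Finset.sum_eq_zero_iff_of_nonneg
        (fun v _ => sub_nonneg.mpr (hTleV v))).mp this v (Finset.mem_univ v)
      rw [if_pos hv, if_pos hv, hEv, zero_mul, sub_zero] at hz
      exact hz
    -- conclude CondIndep
    intro x hCx
    simp only [hEset, hyCset]
    set v := proj E x with hv
    have hfix : proj E v = v := proj_proj E x
    have hmE : margProb p E x = margProb p E v := (margProb_proj subset_rfl x).symm
    have hmC : margProb p C x = margProb p C v := (margProb_proj hCE x).symm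
    have hmyC : margProb p (insert y C) x = margProb p (insert y C) v :=
      (margProb_proj hyCE x).symm
    have hmBC : margProb p (B ∪ C) x = margProb p (B ∪ C) v :=
      (margProb_proj hBCE x).symm
    rw [hmE, hmC, hmyC, hmBC]
    rcases eq_or_lt_of_le (margProb_nonneg hp.1 E v) with hE0 | hE0
    · -- zero case
      have hCv : 0 < margProb p C v := hmC ▸ hCx
      have := hTV v hfix hE0.symm
      rcases div_eq_zero_iff.mp this with h | h
      · rw [← hE0, zero_mul, h]
      · exact absurd h hCv.ne'
    · -- positive case: extract a point w
      have hex : ∃ w : ∀ i, α i,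
          (if ∀ i ∈ E, w i = v i then p w else 0) ≠ 0 := by
        by_contra hc
        push_neg at hc
        have : margProb p E v = 0 := Finset.sum_eq_zero fun w _ => hc w
        exact hE0.ne' this
      obtain ⟨w, hw⟩ := hex
      have hcond : ∀ i ∈ E, w i = v i := by
        by_contra hc; rw [if_neg hc] at hw; exact hw rfl
      have hpw : 0 < p w := by
        rw [if_pos hcond] at hw
        exact lt_of_le_of_ne (hp.1 w) (Ne.symm hw)
      have heq := haw1 w hpw
      have trE : margProb p E w = margProb p E v := margProb_congr fun i hi => hcond i hi
      have trC : margProb p C w = margProb p C v := margProb_congr fun i hi => hcond i (hCE hi)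
      have tryC : margProb p (insert y C) w = margProb p (insert y C) v :=
        margProb_congr fun i hi => hcond i (hyCE hi)
      have trBC : margProb p (B ∪ C) w = margProb p (B ∪ C) v :=
        margProb_congr fun i hi => hcond i (hBCE hi)
      rw [trE, trC, tryC, trBC] at heq
      exact heq
  · -- CondIndep → CMI = 0
    intro hci
    rw [hCMI]
    refine Finset.sum_eq_zero fun w _ => ?_
    rcases eq_or_lt_of_le (hp.1 w) with hw | hw
    · rw [← hw, zero_mul]
    · have hCw : 0 < margProb p C w := posmarg w hw C
      have := hci w hCw
      rw [hEset, hyCset] at this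
      have h3 := posmarg w hw (insert y C)
      have h4 := posmarg w hw (B ∪ C)
      have : aw w = 1 := by
        simp only [hawdef]
        rw [this, div_self (by positivity)]
      rw [this, Real.log_one, mul_zero]

end CMIKey
section Chain
variable {p : (∀ i, α i) → ℝ}

lemma MI_chain (hp : IsDist p) (y : ι) (B C : Finset ι) :
    MI p {y} (B ∪ C) = MI p {y} C + CMI p {y} B C := by
  unfold MI CMI
  rw [← Finset.sum_add_distrib]
  refine Finset.sum_congr rfl fun w _ => ?_
  rcases eq_or_lt_of_le (hp.1 w) with hw | hw
  · rw [← hw]; ring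
  · have e : ∀ D : Finset ι, margProb p D w ≠ 0 :=
      fun D => (lt_of_lt_of_le hw (le_margProb hp.1 D w)).ne'
    have hassoc : ({y} : Finset ι) ∪ (B ∪ C) = {y} ∪ B ∪ C := (Finset.union_assoc _ _ _).symm
    rw [hassoc, ← mul_add]
    congr 1
    rw [Real.log_div (e _) (mul_ne_zero (e _) (e _)), Real.log_mul (e _) (e _),
      Real.log_div (e _) (mul_ne_zero (e _) (e _)), Real.log_mul (e _) (e _),
      Real.log_div (mul_ne_zero (e _) (e _)) (mul_ne_zero (e _) (e _)),
      Real.log_mul (e _) (e _), Real.log_mul (e _) (e _)]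
    ring

lemma MI_mono (hp : IsDist p) (y : ι) {A B : Finset ι} (hAB : A ⊆ B) (hyB : y ∉ B) :
    MI p {y} A ≤ MI p {y} B := by
  have h := MI_chain hp y (B \ A) A
  rw [Finset.sdiff_union_of_subset hAB] at h
  have hnn := (cmi_key p hp y (B \ A) A (fun h' => hyB (Finset.mem_sdiff.mp h').1)
    (fun h' => hyB (hAB h'))).1
  linarith

lemma MI_eq_iff_blanket (hp : IsDist p) (y : ι) {T M : Finset ι} (hMT : M ⊆ T)
    (hyT : y ∉ T) :
    MI p {y} T = MI p {y} M ↔ CondIndep p {y} (T \ M) M := by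
  have h := MI_chain hp y (T \ M) M
  rw [Finset.sdiff_union_of_subset hMT] at h
  have hkey := cmi_key p hp y (T \ M) M (fun h' => hyT (Finset.mem_sdiff.mp h').1)
    (fun h' => hyT (hMT h'))
  constructor
  · intro he; exact hkey.2.mp (by linarith)
  · intro hc; have := hkey.2.mpr hc; linarith

end Chain
section MainAux

lemma blanket_iff_MI {p : (∀ i, α i) → ℝ} (hp : IsDist p) (y : ι) {T M : Finset ι}
    (hMT : M ⊆ T) (hyT : y ∉ T) :
    MarkovBlanket p y T M ↔ MI p {y} T = MI p {y} M :=
  ⟨fun h => (MI_eq_iff_blanket hp y hMT hyT).mpr h.2,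
   fun h => ⟨hMT, (MI_eq_iff_blanket hp y hMT hyT).mp h⟩⟩

end MainAux


/-- correctness of Algorithm 2: with `M₀` a Markov boundary of `Y`
within `S` and, for each `Xᵢ ∈ M₀`, `Mᵢ` a Markov boundary of `Y` within `S \ {Xᵢ}`,
the conditions (a) `MI(Y, S \ {Xᵢ}) = MI(Y, S)` and (b) `CMI(Y, M₀ | Mᵢ) = 0`, i.e.
`Y ⊥ M₀ | Mᵢ`, are equivalent; consequently `Y` has multiple Markov boundaries within
`S` iff (b) holds for some `Xᵢ ∈ M₀`. -/
theorem algorithm2_correctness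
    (p : (∀ i, α i) → ℝ) (hp : IsDist p)
    (y : ι) (S : Finset ι) (hyS : y ∉ S)
    (M₀ : Finset ι) (hM₀ : MarkovBoundary p y S M₀)
    (Mi : ι → Finset ι)
    (hMi : ∀ X ∈ M₀, MarkovBoundary p y (S.erase X) (Mi X)) :
    (∀ X ∈ M₀,
      (MI p {y} (S.erase X) = MI p {y} S ↔ CondIndep p {y} M₀ (Mi X)) ∧
      (MI p {y} (S.erase X) = MI p {y} S ↔ CMI p {y} M₀ (Mi X) = 0)) ∧
    ((∃ M₁ M₂, MarkovBoundary p y S M₁ ∧ MarkovBoundary p y S M₂ ∧ M₁ ≠ M₂) ↔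
      ∃ X ∈ M₀, CondIndep p {y} M₀ (Mi X)) := by
  classical
  have hM₀S : M₀ ⊆ S := hM₀.1.1
  have hyM₀ : y ∉ M₀ := fun h => hyS (hM₀S h)
  have MI0 : MI p {y} S = MI p {y} M₀ := (blanket_iff_MI hp y hM₀S hyS).mp hM₀.1
  -- preliminaries for each X ∈ M₀
  have hyE : ∀ X, y ∉ S.erase X := fun X h => hyS (Finset.mem_of_mem_erase h)
  have key1 : ∀ X ∈ M₀,
      (MI p {y} (S.erase X) = MI p {y} S ↔ CondIndep p {y} M₀ (Mi X)) := by
    intro X hX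
    set M := Mi X with hM
    have hME : M ⊆ S.erase X := (hMi X hX).1.1
    have hMS : M ⊆ S := hME.trans (Finset.erase_subset X S)
    have hyM : y ∉ M := fun h => hyS (hMS h)
    have MIe : MI p {y} (S.erase X) = MI p {y} M :=
      (blanket_iff_MI hp y hME (hyE X)).mp (hMi X hX).1
    have hchain : MI p {y} (M₀ ∪ M) = MI p {y} M + CMI p {y} M₀ M :=
      MI_chain hp y M₀ M
    have hMM₀S : M₀ ∪ M ⊆ S := Finset.union_subset hM₀S hMS
    have hmono1 : MI p {y} (M₀ ∪ M) ≤ MI p {y} S := MI_mono hp y hMM₀S hyS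
    have hmono2 : MI p {y} M₀ ≤ MI p {y} (M₀ ∪ M) :=
      MI_mono hp y Finset.subset_union_left (fun h => hyS (hMM₀S h))
    have hmono3 : MI p {y} M ≤ MI p {y} (S.erase X) := MI_mono hp y hME (hyE X)
    have hmono4 : MI p {y} (S.erase X) ≤ MI p {y} S :=
      MI_mono hp y (Finset.erase_subset X S) hyS
    have hkey := cmi_key p hp y M₀ M hyM₀ hyM
    constructor
    · intro ha
      refine hkey.2.mp (le_antisymm (by linarith) hkey.1)
    · intro hc
      have h0 := hkey.2.mpr hc
      linarith
  refine ⟨fun X hX => ⟨key1 X hX, ?_⟩, ?_, ?_⟩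
  · -- second iff via cmi_key
    have hME : Mi X ⊆ S.erase X := (hMi X hX).1.1
    have hyM : y ∉ Mi X := fun h => hyS ((hME.trans (Finset.erase_subset X S)) h)
    have hkey := cmi_key p hp y M₀ (Mi X) hyM₀ hyM
    exact (key1 X hX).trans (hkey.2).symm
  · -- multiple boundaries → ∃ X
    rintro ⟨M₁, M₂, h1, h2, hne⟩
    have hex : ∃ M', MarkovBoundary p y S M' ∧ M' ≠ M₀ := by
      by_cases h : M₁ = M₀
      · exact ⟨M₂, h2, fun e => hne (h.trans e.symm)⟩
      · exact ⟨M₁, h1, h⟩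
    obtain ⟨M', hM', hMne⟩ := hex
    have hnsub : ¬ M₀ ⊆ M' := by
      intro hsub
      exact hM'.2 M₀ (HasSubset.Subset.ssubset_of_ne hsub (fun e => hMne e.symm)) hM₀.1
    obtain ⟨X, hXM₀, hXnM'⟩ := Finset.not_subset.mp hnsub
    refine ⟨X, hXM₀, (key1 X hXM₀).mp ?_⟩
    have hM'S : M' ⊆ S := hM'.1.1
    have hM'E : M' ⊆ S.erase X := fun i hi =>
      Finset.mem_erase.mpr ⟨fun e => hXnM' (e ▸ hi), hM'S hi⟩
    have MIb : MI p {y} S = MI p {y} M' := (blanket_iff_MI hp y hM'S hyS).mp hM'.1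
    have h1' : MI p {y} M' ≤ MI p {y} (S.erase X) := MI_mono hp y hM'E (hyE X)
    have h2' : MI p {y} (S.erase X) ≤ MI p {y} S :=
      MI_mono hp y (Finset.erase_subset X S) hyS
    linarith
  · -- ∃ X → multiple boundaries
    rintro ⟨X, hX, hc⟩
    set M := Mi X with hM
    have hME : M ⊆ S.erase X := (hMi X hX).1.1
    have hMS : M ⊆ S := hME.trans (Finset.erase_subset X S)
    have hyM : y ∉ M := fun h => hyS (hMS h)
    have ha : MI p {y} (S.erase X) = MI p {y} S := (key1 X hX).mpr hc
    -- MI S = MI M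
    have MIe : MI p {y} (S.erase X) = MI p {y} M :=
      (blanket_iff_MI hp y hME (hyE X)).mp (hMi X hX).1
    have MIM : MI p {y} S = MI p {y} M := by linarith
    have hbl : MarkovBlanket p y S M := (blanket_iff_MI hp y hMS hyS).mpr MIM
    have hbd : MarkovBoundary p y S M := by
      refine ⟨hbl, fun M' hM'M hbl' => ?_⟩
      have hM'E : M' ⊆ S.erase X := (subset_of_ssubset hM'M).trans hME
      have MIM' : MI p {y} S = MI p {y} M' := (blanket_iff_MI hp y hbl'.1 hyS).mp hbl'
      have : MI p {y} (S.erase X) = MI p {y} M' := by linarith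
      exact (hMi X hX).2 M' hM'M ((blanket_iff_MI hp y hM'E (hyE X)).mpr this)
    have hXM : X ∉ M := fun h => (Finset.mem_erase.mp (hME h)).1 rfl
    exact ⟨M₀, M, hM₀, hbd, fun e => hXM (e ▸ hX)⟩

end
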